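/- Let m be a positive odd integer. Then for all real numbers s, t with 0 < s ≤ t, one has ψ^(m+1)(s)/ψ^(m)(s) ≤ ψ^(m+1)(t)/ψ^(m)(t); that is, the function y ↦ ψ^(m+1)(y)/ψ^(m)(y) is non-decreasing on (0,∞). -/

import Mathlib

open Real Filter Topology Set

local notation "γ" => Real.eulerMascheroniConstant

/-- The digamma (psi) function: logarithmic derivative of the Gamma function. -/
noncomputable def psi (t : ℝ) : ℝ := deriv Real.Gamma t / Real.Gamma t

namespace PolyGammaAux

/-- The sum `∑ 1/(y+n)^k`. -/
noncomputable def F (k : ℕ) (y : ℝ) : ℝ := ∑' n : ℕ, ((y + n) ^ k)⁻¹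

lemma summable_one_div_shift_sq : Summable (fun n : ℕ => ((1 + (n:ℝ)) ^ 2)⁻¹) := by
  have h : Summable (fun n : ℕ => ((n : ℝ) ^ 2)⁻¹) := by
    simpa [one_div] using Real.summable_one_div_nat_pow.2 le_rfl
  have := (summable_nat_add_iff 1).2 h
  refine this.congr fun n => ?_
  push_cast
  ring_nf

lemma summable_F {y : ℝ} (hy : 0 < y) {k : ℕ} (hk : 2 ≤ k) :
    Summable (fun n : ℕ => ((y + n) ^ k)⁻¹) := by
  set c : ℝ := min y 1 with hc
  have hc0 : 0 < c := lt_min hy one_pos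
  refine Summable.of_nonneg_of_le (fun n => by positivity)
    (fun n => ?_) ((summable_one_div_shift_sq.mul_left ((c ^ k)⁻¹)))
  have h1 : c * (1 + n) ≤ y + n := by
    rcases le_total y 1 with h | h
    · have hcy : c = y := min_eq_left h
      rw [hcy]; nlinarith [Nat.cast_nonneg (α := ℝ) n]
    · have hcy : c = 1 := min_eq_right h
      rw [hcy]; nlinarith [Nat.cast_nonneg (α := ℝ) n]
  have h2 : (1 + (n:ℝ)) ^ 2 ≤ (1 + (n:ℝ)) ^ k := pow_le_pow_right₀ (le_add_of_nonneg_right n.cast_nonneg) hk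
  calc ((y + n) ^ k)⁻¹ ≤ ((c * (1 + n)) ^ k)⁻¹ :=
        inv_anti₀ (pow_pos (by positivity) k) (pow_le_pow_left₀ (by positivity) h1 k)
      _ = (c ^ k)⁻¹ * ((1 + (n:ℝ)) ^ k)⁻¹ := by rw [mul_pow, mul_inv]
      _ ≤ (c ^ k)⁻¹ * ((1 + (n:ℝ)) ^ 2)⁻¹ := by
        exact mul_le_mul_of_nonneg_left
          (inv_anti₀ (by positivity) h2) (by positivity)

lemma F_pos {y : ℝ} (hy : 0 < y) {k : ℕ} (hk : 2 ≤ k) : 0 < F k y := by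
  refine Summable.tsum_pos (summable_F hy hk) (fun n => by positivity) 0 ?_
  have h : 0 < y + ((0:ℕ):ℝ) := by positivity
  positivity

lemma hasDerivAt_term {k : ℕ} (n : ℕ) {y : ℝ} (hy : 0 < y + n) :
    HasDerivAt (fun z : ℝ => ((z + n) ^ k)⁻¹)
      (-(k:ℝ) * ((y + n) ^ (k + 1))⁻¹) y := by
  have h0 : HasDerivAt (fun z : ℝ => z + n) 1 y := (hasDerivAt_id y).add_const _
  have h2 := (hasDerivAt_zpow (-(k:ℤ)) (y + n) (Or.inl hy.ne')).comp y h0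
  simp only [mul_one] at h2
  have e1 : (fun z : ℝ => ((z + n) ^ k)⁻¹) = ((fun z : ℝ => z ^ (-(k:ℤ))) ∘ fun z => z + n) := by
    funext z; simp [Function.comp, zpow_neg]
  rw [e1]
  refine h2.congr_deriv ?_
  have e2 : (y + (n:ℝ)) ^ (-(k:ℤ) - 1) = ((y + n) ^ (k + 1))⁻¹ := by
    rw [show -(k:ℤ) - 1 = -((k:ℤ) + 1) by ring, zpow_neg,
      show (k:ℤ) + 1 = ((k + 1 : ℕ) : ℤ) by push_cast; ring, zpow_natCast]
  rw [e2]
  push_cast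
  ring

lemma hasDerivAt_F {k : ℕ} (hk : 2 ≤ k) {x : ℝ} (hx : 0 < x) :
    HasDerivAt (F k) (-(k:ℝ) * F (k + 1) x) x := by
  have hmem : x ∈ Ioi (x/2) := by simp only [mem_Ioi]; linarith
  have hpos : ∀ y ∈ Ioi (x/2), ∀ n : ℕ, 0 < y + n := by
    intro y hy n
    simp only [mem_Ioi] at hy
    have : 0 < y := lt_trans (by linarith) hy
    positivity
  have key := hasDerivAt_tsum_of_isPreconnected
    (u := fun n : ℕ => (k:ℝ) * ((x/2 + n) ^ (k+1))⁻¹)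
    (g := fun n (z : ℝ) => ((z + n) ^ k)⁻¹)
    (g' := fun n (z : ℝ) => -(k:ℝ) * ((z + n) ^ (k + 1))⁻¹)
    (((summable_F (by linarith : (0:ℝ) < x/2) (by omega : 2 ≤ k + 1))).mul_left (k:ℝ))
    isOpen_Ioi (convex_Ioi _).isPreconnected
    (fun n y hy => hasDerivAt_term n (hpos y hy n))
    (fun n y hy => ?_) hmem (summable_F hx hk) hmem
  · rw [F, ← tsum_mul_left]
    exact key
  · have h1 : 0 < y + n := hpos y hy n
    have h2 : x/2 + n ≤ y + n := by
      simp only [mem_Ioi] at hy; linarith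
    have h3 : (0:ℝ) < x/2 + n := by positivity
    rw [norm_mul, norm_neg, Real.norm_natCast, Real.norm_eq_abs,
      abs_of_nonneg (by positivity : (0:ℝ) ≤ ((y+n)^(k+1))⁻¹)]
    exact mul_le_mul_of_nonneg_left
      (inv_anti₀ (pow_pos h3 _) (pow_le_pow_left₀ h3.le h2 _)) (Nat.cast_nonneg k)



/-- term of the digamma series -/
noncomputable def tt (n : ℕ) (y : ℝ) : ℝ := ((n:ℝ) + 1)⁻¹ - (y + n + 1)⁻¹

/-- the digamma function as a series -/
noncomputable def L (y : ℝ) : ℝ := (-γ - y⁻¹) + ∑' n : ℕ, tt n y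

lemma tt_nonneg {y : ℝ} (hy : 0 ≤ y) (n : ℕ) : 0 ≤ tt n y := by
  have h1 : (0:ℝ) < (n:ℝ) + 1 := by positivity
  have h2 : (n:ℝ) + 1 ≤ y + n + 1 := by linarith
  have := inv_anti₀ h1 h2
  simpa [tt, sub_nonneg] using this

lemma tt_le {y : ℝ} (hy : 0 ≤ y) (n : ℕ) : tt n y ≤ y * ((1 + (n:ℝ)) ^ 2)⁻¹ := by
  have h1 : (0:ℝ) < (n:ℝ) + 1 := by positivity
  have h2 : (0:ℝ) < y + n + 1 := by linarith
  have e : tt n y = y / (((n:ℝ) + 1) * (y + n + 1)) := by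
    rw [tt]
    field_simp
    ring
  rw [e]
  rw [div_eq_mul_inv, mul_comm ((n:ℝ)+1)]
  rcases eq_or_lt_of_le hy with h | h
  · simp [← h]
  · apply mul_le_mul_of_nonneg_left _ hy
    apply inv_anti₀ (by positivity)
    have : (1 + (n:ℝ)) ≤ y + n + 1 := by linarith
    calc (1 + (n:ℝ))^2 = (1+(n:ℝ)) * (1+(n:ℝ)) := sq (1+(n:ℝ)) ▸ rfl
      _ ≤ (y + n + 1) * ((n:ℝ) + 1) := by nlinarith [Nat.cast_nonneg (α := ℝ) n]

lemma summable_tt {y : ℝ} (hy : 0 ≤ y) : Summable (fun n => tt n y) :=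
  Summable.of_nonneg_of_le (tt_nonneg hy) (tt_le hy)
    (summable_one_div_shift_sq.mul_left y)

/-- derivative of the `n`-th partial logGamma sequence -/
noncomputable def D (n : ℕ) (y : ℝ) : ℝ :=
  Real.log n - ∑ m ∈ Finset.range (n + 1), (y + m)⁻¹

lemma hasDerivAt_logGammaSeq {y : ℝ} (hy : 0 < y) (n : ℕ) :
    HasDerivAt (fun z => Real.BohrMollerup.logGammaSeq z n) (D n y) y := by
  have h1 : HasDerivAt (fun z : ℝ => z * Real.log n + Real.log (n.factorial)) (Real.log n) y := by
    simpa using ((hasDerivAt_id y).mul_const (Real.log n)).add_const (Real.log (n.factorial))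
  have h2 : HasDerivAt (fun z : ℝ => ∑ m ∈ Finset.range (n + 1), Real.log (z + m))
      (∑ m ∈ Finset.range (n + 1), (y + m)⁻¹) y := by
    apply HasDerivAt.fun_sum
    intro m _
    have hm : 0 < y + m := by positivity
    have := ((hasDerivAt_id y).add_const (m:ℝ)).log hm.ne'
    simpa [one_div] using this
  have := h1.fun_sub h2
  simpa [Real.BohrMollerup.logGammaSeq, D] using this

lemma harmonic_cast (n : ℕ) :
    ((harmonic n : ℚ) : ℝ) = ∑ m ∈ Finset.range n, ((m:ℝ) + 1)⁻¹ := by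
  rw [harmonic]
  push_cast
  rfl

/-- key identity -/
lemma L_sub_D {y : ℝ} (hy : 0 < y) (n : ℕ) :
    L y - D n y = ((harmonic n : ℚ) : ℝ) - Real.log n - γ + ∑' k : ℕ, tt (k + n) y := by
  have hsum := summable_tt hy.le
  have e1 : ∑' m : ℕ, tt m y = ∑ m ∈ Finset.range n, tt m y + ∑' k : ℕ, tt (k + n) y :=
    (Summable.sum_add_tsum_nat_add n hsum).symm
  have e2 : D n y = Real.log n - (y⁻¹ + ∑ m ∈ Finset.range n, (y + m + 1)⁻¹) := by
    rw [D, Finset.sum_range_succ']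
    have hcast : ∀ m : ℕ, (y + ((m+1:ℕ):ℝ))⁻¹ = (y + m + 1)⁻¹ := fun m => by push_cast; ring_nf
    simp only [hcast]
    push_cast
    ring
  have e3 : ∑ m ∈ Finset.range n, tt m y
      = ((harmonic n : ℚ) : ℝ) - ∑ m ∈ Finset.range n, (y + m + 1)⁻¹ := by
    rw [harmonic_cast, ← Finset.sum_sub_distrib]
    exact Finset.sum_congr rfl fun m _ => rfl
  rw [L, e1, e2, e3]
  ring

noncomputable def Sseq (n : ℕ) : ℝ := ∑' k : ℕ, ((1 + (((k + n : ℕ)):ℝ)) ^ 2)⁻¹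

lemma Sseq_tendsto : Tendsto Sseq atTop (𝓝 0) :=
  tendsto_sum_nat_add (fun m : ℕ => ((1 + (m:ℝ)) ^ 2)⁻¹)

lemma tail_le {y : ℝ} (hy : 0 < y) (n : ℕ) :
    ∑' k : ℕ, tt (k + n) y ≤ y * Sseq n := by
  have hs1 : Summable (fun k => tt (k + n) y) :=
    (summable_nat_add_iff n).2 (summable_tt hy.le)
  have hs2 : Summable (fun k : ℕ => y * ((1 + (((k + n : ℕ)):ℝ)) ^ 2)⁻¹) :=
    ((summable_nat_add_iff n).2 summable_one_div_shift_sq).mul_left y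
  calc ∑' k : ℕ, tt (k + n) y ≤ ∑' k : ℕ, y * ((1 + (((k + n : ℕ)):ℝ)) ^ 2)⁻¹ :=
        Summable.tsum_le_tsum (fun k => tt_le hy.le (k + n)) hs1 hs2
    _ = y * Sseq n := by rw [Sseq, tsum_mul_left]

lemma tail_nonneg {y : ℝ} (hy : 0 < y) (n : ℕ) : 0 ≤ ∑' k : ℕ, tt (k + n) y :=
  tsum_nonneg fun k => tt_nonneg hy.le (k + n)

lemma tlu : TendstoLocallyUniformlyOn D L atTop (Ioi 0) := by
  rw [Metric.tendstoLocallyUniformlyOn_iff]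
  intro ε hε x hx
  have hx0 : 0 < x := mem_Ioi.1 hx
  refine ⟨Ioo 0 (x + 1), mem_nhdsWithin_of_mem_nhds (Ioo_mem_nhds hx0 (by linarith)), ?_⟩
  have h1 : Tendsto (fun n : ℕ => ((harmonic n : ℚ):ℝ) - Real.log n - γ) atTop (𝓝 0) := by
    have h2 := Real.tendsto_harmonic_sub_log.sub_const γ
    simpa using h2
  have h2 : Tendsto (fun n : ℕ => (x + 1) * Sseq n) atTop (𝓝 0) := by
    simpa using Sseq_tendsto.const_mul (x + 1)
  have h3 : ∀ᶠ n in atTop,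
      |((harmonic n : ℚ):ℝ) - Real.log n - γ| + (x + 1) * Sseq n < ε := by
    have h4 := h1.abs.add h2
    simp only [abs_zero, add_zero] at h4
    exact h4.eventually (gt_mem_nhds hε)
  filter_upwards [h3] with n hn y hy
  obtain ⟨hy0, hyb⟩ := hy
  have hSnn : 0 ≤ Sseq n := tsum_nonneg fun k => by positivity
  rw [Real.dist_eq, L_sub_D hy0 n]
  calc |((harmonic n : ℚ):ℝ) - Real.log n - γ + ∑' k : ℕ, tt (k + n) y|
      ≤ |((harmonic n : ℚ):ℝ) - Real.log n - γ| + |∑' k : ℕ, tt (k + n) y| := abs_add_le _ _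
    _ ≤ |((harmonic n : ℚ):ℝ) - Real.log n - γ| + (x + 1) * Sseq n := by
        gcongr
        rw [abs_of_nonneg (tail_nonneg hy0 n)]
        calc ∑' k : ℕ, tt (k + n) y ≤ y * Sseq n := tail_le hy0 n
          _ ≤ (x + 1) * Sseq n := mul_le_mul_of_nonneg_right hyb.le hSnn
    _ < ε := hn

lemma hasDerivAt_log_Gamma {x : ℝ} (hx : 0 < x) :
    HasDerivAt (fun y => Real.log (Real.Gamma y)) (L x) x := by
  refine hasDerivAt_of_tendstoLocallyUniformlyOn (f := fun (n : ℕ) (z : ℝ) => Real.BohrMollerup.logGammaSeq z n)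
    isOpen_Ioi tlu ?_ ?_ (mem_Ioi.2 hx)
  · exact Eventually.of_forall fun n y hy => hasDerivAt_logGammaSeq (mem_Ioi.1 hy) n
  · exact fun y hy => Real.BohrMollerup.tendsto_log_gamma (mem_Ioi.1 hy)

lemma psi_eq_L {x : ℝ} (hx : 0 < x) : psi x = L x := by
  have hne : ∀ m : ℕ, x ≠ -(m:ℝ) := fun m =>
    ((neg_nonpos.2 (Nat.cast_nonneg m)).trans_lt hx).ne'
  have hg := (Real.differentiableAt_Gamma hne).hasDerivAt.log (Real.Gamma_ne_zero hne)
  exact hg.unique (hasDerivAt_log_Gamma hx)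

lemma hasDerivAt_tt (n : ℕ) {y : ℝ} (hy : 0 < y) :
    HasDerivAt (fun z => tt n z) (((y + n + 1) ^ 2)⁻¹) y := by
  have h0 : HasDerivAt (fun z : ℝ => z + n + 1) 1 y :=
    ((hasDerivAt_id y).add_const (n:ℝ)).add_const 1
  have h1 := (h0.inv (by positivity : y + (n:ℝ) + 1 ≠ 0)).const_sub (((n:ℝ) + 1)⁻¹)
  have e : -(-1 / (y + n + 1) ^ 2) = ((y + n + 1) ^ 2)⁻¹ := by
    rw [neg_div, neg_neg, one_div]
  rw [← e]
  exact h1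

lemma hasDerivAt_L {x : ℝ} (hx : 0 < x) : HasDerivAt L (F 2 x) x := by
  have hinv : HasDerivAt (fun y : ℝ => -γ - y⁻¹) ((x ^ 2)⁻¹) x := by
    have h := (hasDerivAt_inv hx.ne').const_sub (-γ)
    simpa using h
  have hser : HasDerivAt (fun y : ℝ => ∑' n : ℕ, tt n y)
      (∑' n : ℕ, ((x + n + 1) ^ 2)⁻¹) x := by
    apply hasDerivAt_tsum_of_isPreconnected
      (u := fun n : ℕ => ((1 + (n:ℝ)) ^ 2)⁻¹)
      summable_one_div_shift_sq isOpen_Ioi (convex_Ioi _).isPreconnected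
      (fun n y hy => hasDerivAt_tt n (mem_Ioi.1 hy))
      (fun n y hy => ?_) (mem_Ioi.2 hx) (summable_tt hx.le) (mem_Ioi.2 hx)
    have hy0 : 0 < y := mem_Ioi.1 hy
    rw [Real.norm_eq_abs, abs_of_nonneg (by positivity)]
    apply inv_anti₀ (by positivity)
    have h : (1:ℝ) + n ≤ y + n + 1 := by linarith
    exact pow_le_pow_left₀ (by positivity) h 2
  have hsum := hinv.add hser
  have e : F 2 x = (x ^ 2)⁻¹ + ∑' n : ℕ, ((x + n + 1) ^ 2)⁻¹ := by
    rw [F, Summable.tsum_eq_zero_add (summable_F hx le_rfl)]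
    congr 1
    · norm_num
    · refine tsum_congr fun n => ?_
      push_cast
      ring_nf
  rw [e]
  exact hsum

lemma psi_eventuallyEq_L {x : ℝ} (hx : 0 < x) : psi =ᶠ[𝓝 x] L :=
  Filter.eventuallyEq_of_mem (isOpen_Ioi.mem_nhds (mem_Ioi.2 hx))
    fun y hy => psi_eq_L (mem_Ioi.1 hy)

lemma iteratedDeriv_psi : ∀ m : ℕ, 0 < m → ∀ {x : ℝ}, 0 < x →
    iteratedDeriv m psi x = (-1 : ℝ) ^ (m + 1) * (m.factorial : ℝ) * F (m + 1) x := by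
  intro m
  induction m with
  | zero => omega
  | succ m ih =>
    intro _ x hx
    rcases Nat.eq_zero_or_pos m with h0 | hmpos
    · subst h0
      rw [iteratedDeriv_one, (psi_eventuallyEq_L hx).deriv_eq, (hasDerivAt_L hx).deriv]
      norm_num
    · rw [iteratedDeriv_succ]
      have heq : iteratedDeriv m psi =ᶠ[𝓝 x]
          (fun y => (-1:ℝ) ^ (m+1) * (m.factorial : ℝ) * F (m+1) y) :=
        Filter.eventuallyEq_of_mem (isOpen_Ioi.mem_nhds (mem_Ioi.2 hx))
          fun y hy => ih hmpos (mem_Ioi.1 hy)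
      have hF : HasDerivAt (fun y => (-1:ℝ) ^ (m+1) * (m.factorial : ℝ) * F (m+1) y)
          ((-1:ℝ) ^ (m+1) * (m.factorial : ℝ) * (-((m+1 : ℕ):ℝ) * F (m+1+1) x)) x :=
        (hasDerivAt_F (k := m+1) (by omega) hx).const_mul _
      rw [heq.deriv_eq, hF.deriv]
      rw [Nat.factorial_succ]
      push_cast
      ring

lemma F_sq_le (p : ℕ) (hp : 1 ≤ p) {y : ℝ} (hy : 0 < y) :
    F (2*p+1) y ^ 2 ≤ F (2*p) y * F (2*p+2) y := by
  have hpos : ∀ n : ℕ, 0 < y + n := fun n => by positivity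
  have hsum := summable_F hy (show 2 ≤ 2*p+1 by omega)
  have key : ∀ N : ℕ, (∑ n ∈ Finset.range N, ((y+n)^(2*p+1))⁻¹)^2
      ≤ F (2*p) y * F (2*p+2) y := by
    intro N
    have cs := Finset.sum_mul_sq_le_sq_mul_sq (Finset.range N)
      (fun n : ℕ => ((y+n)^p)⁻¹) (fun n : ℕ => ((y+n)^(p+1))⁻¹)
    have e1 : ∀ n : ℕ, ((y+n)^p)⁻¹ * ((y+n)^(p+1))⁻¹ = ((y+n)^(2*p+1))⁻¹ := fun n => by
      rw [← mul_inv, ← pow_add, show p+(p+1) = 2*p+1 from by ring]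
    have e2 : ∀ n : ℕ, (((y+n)^p)⁻¹)^2 = ((y+n)^(2*p))⁻¹ := fun n => by
      rw [← inv_pow, ← pow_mul, show p*2 = 2*p from by ring, inv_pow]
    have e3 : ∀ n : ℕ, (((y+n)^(p+1))⁻¹)^2 = ((y+n)^(2*p+2))⁻¹ := fun n => by
      rw [← inv_pow, ← pow_mul, show (p+1)*2 = 2*p+2 from by ring, inv_pow]
    simp only [e1, e2, e3] at cs
    refine cs.trans ?_
    have hA : ∑ n ∈ Finset.range N, ((y+(n:ℝ))^(2*p))⁻¹ ≤ F (2*p) y :=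
      Summable.sum_le_tsum _ (fun n _ => by positivity) (summable_F hy (by omega))
    have hB : ∑ n ∈ Finset.range N, ((y+(n:ℝ))^(2*p+2))⁻¹ ≤ F (2*p+2) y :=
      Summable.sum_le_tsum _ (fun n _ => by positivity) (summable_F hy (by omega))
    exact mul_le_mul hA hB (Finset.sum_nonneg fun n _ => by positivity)
      (F_pos hy (by omega)).le
  have htend : Tendsto (fun N : ℕ => (∑ n ∈ Finset.range N, ((y+(n:ℝ))^(2*p+1))⁻¹)^2)
      atTop (𝓝 (F (2*p+1) y ^ 2)) :=
    (hsum.hasSum.tendsto_sum_nat).pow 2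
  exact le_of_tendsto htend (Eventually.of_forall key)

lemma ratio_anti (p : ℕ) (hp : 1 ≤ p) :
    AntitoneOn (fun y => F (2*p+1) y / F (2*p) y) (Ioi 0) := by
  have hder : ∀ y ∈ Ioi (0:ℝ), HasDerivAt (fun z => F (2*p+1) z / F (2*p) z)
      ((-((2*p+1 : ℕ):ℝ) * F (2*p+1+1) y * F (2*p) y
        - F (2*p+1) y * (-((2*p : ℕ):ℝ) * F (2*p+1) y)) / F (2*p) y ^ 2) y := by
    intro y hy
    have hy0 : 0 < y := mem_Ioi.1 hy
    exact (hasDerivAt_F (k := 2*p+1) (by omega) hy0).div (hasDerivAt_F (k := 2*p) (by omega) hy0)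
      (F_pos hy0 (by omega)).ne'
  apply antitoneOn_of_deriv_nonpos (convex_Ioi 0)
  · exact fun y hy => ((hder y hy).differentiableAt).continuousAt.continuousWithinAt
  · intro y hy
    rw [interior_Ioi] at hy
    exact ((hder y hy).differentiableAt).differentiableWithinAt
  · intro y hy
    rw [interior_Ioi] at hy
    have hy0 : 0 < y := mem_Ioi.1 hy
    rw [(hder y hy).deriv]
    apply div_nonpos_of_nonpos_of_nonneg _ (sq_nonneg _)
    have hA : 0 < F (2*p) y := F_pos hy0 (by omega)
    have hC : 0 < F (2*p+2) y := F_pos hy0 (by omega)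
    have hB2 : F (2*p+1) y ^ 2 ≤ F (2*p) y * F (2*p+2) y := F_sq_le p hp hy0
    have h22 : F (2*p+1+1) y = F (2*p+2) y := by norm_num
    rw [h22]
    push_cast
    nlinarith [mul_le_mul_of_nonneg_left hB2 (by positivity : (0:ℝ) ≤ 2*(p:ℝ)),
      mul_pos hA hC]

end PolyGammaAux

theorem polygamma_ratio_nondecreasing (m : ℕ) (hm : 0 < m) (hodd : Odd m)
    {s t : ℝ} (hs : 0 < s) (hst : s ≤ t) :
    iteratedDeriv (m + 1) psi s / iteratedDeriv m psi s ≤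
      iteratedDeriv (m + 1) psi t / iteratedDeriv m psi t := by
  open PolyGammaAux in
  obtain ⟨p, hp⟩ := hodd
  have ht0 : 0 < t := lt_of_lt_of_le hs hst
  have hq1 : m + 1 = 2*(p+1) := by omega
  have hq2 : m + 1 + 1 = 2*(p+1)+1 := by omega
  have hs1 := PolyGammaAux.iteratedDeriv_psi m hm hs
  have hs2 := PolyGammaAux.iteratedDeriv_psi (m+1) (by omega) hs
  have ht1 := PolyGammaAux.iteratedDeriv_psi m hm ht0
  have ht2 := PolyGammaAux.iteratedDeriv_psi (m+1) (by omega) ht0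
  have hsgn1 : ((-1:ℝ)) ^ (m+1) = 1 := Even.neg_one_pow ⟨p+1, by omega⟩
  have hsgn2 : ((-1:ℝ)) ^ (m+1+1) = -1 := by rw [pow_succ, hsgn1]; norm_num
  rw [hs1, hs2, ht1, ht2, hsgn1, hsgn2]
  have hkey := PolyGammaAux.ratio_anti (p+1) (by omega) (mem_Ioi.2 hs) (mem_Ioi.2 ht0) hst
  simp only [← hq1, ← hq2] at hkey
  have hF1s : 0 < PolyGammaAux.F (m+1) s := PolyGammaAux.F_pos hs (by omega)
  have hF1t : 0 < PolyGammaAux.F (m+1) t := PolyGammaAux.F_pos ht0 (by omega)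
  have hkey2 : PolyGammaAux.F (m+1+1) t * PolyGammaAux.F (m+1) s
      ≤ PolyGammaAux.F (m+1+1) s * PolyGammaAux.F (m+1) t :=
    (div_le_div_iff₀ hF1t hF1s).1 hkey
  have hfac : (0:ℝ) < ((m+1).factorial : ℝ) * (m.factorial : ℝ) := by positivity
  rw [div_le_div_iff₀ (by positivity) (by positivity)]
  nlinarith [mul_le_mul_of_nonneg_left hkey2 hfac.le]
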